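/- Let v₀, v₁, …, v₅ be vectors in a real vector space with symmetric bilinear form, with (vᵢ, vᵢ) = 2 for all i, (v₀, vᵢ) = −1 for i = 1,…,5, and (vᵢ, vⱼ) = 0 for distinct i, j ∈ {1,…,5}. Then there is no integer vector u_* = Σᵢ kᵢvᵢ (kᵢ ∈ ℤ) satisfying (u_*, v₀) = −2, (u_*, v₁) = −2, and (u_*, u_*) = 2. -/

import Mathlib

open Finset in
theorem no_root_for_003_in_31111 {V : Type*} [AddCommGroup V] [Module ℝ V]
    (B : V →ₗ[ℝ] V →ₗ[ℝ] ℝ) (hBsymm : ∀ x y, B x y = B y x)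
    (v : Fin 6 → V)
    (hnorm : ∀ i, B (v i) (v i) = 2)
    (hcenter : ∀ i : Fin 6, i ≠ 0 → B (v 0) (v i) = -1)
    (houter : ∀ i j : Fin 6, i ≠ 0 → j ≠ 0 → i ≠ j → B (v i) (v j) = 0) :
    ¬ ∃ k : Fin 6 → ℤ,
      (fun u => B u (v 0) = -2 ∧ B u (v 1) = -2 ∧ B u u = 2)
        (∑ i, (k i : ℝ) • v i) := by
  rintro ⟨k, h0, h1, h2⟩
  have hb : ∀ i j : Fin 6, B (v i) (v j) =
      if i = j then 2 else if i = 0 ∨ j = 0 then -1 else 0 := by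
    intro i j
    by_cases hij : i = j
    · simp [hij, hnorm]
    · by_cases hi : i = 0
      · subst hi
        simp [hij, hcenter j (Ne.symm hij)]
      · by_cases hj : j = 0
        · subst hj
          rw [hBsymm]
          simp [hi, hij, hcenter i hi]
        · simp [hij, hi, hj, houter i j hi hj hij]
  simp only [Fin.sum_univ_six, map_add, map_smul, LinearMap.add_apply,
    LinearMap.smul_apply, smul_eq_mul, hb] at h0 h1 h2
  simp only [show ((2:Fin 6)=0)=False from by decide, show ((3:Fin 6)=0)=False from by decide, show ((4:Fin 6)=0)=False from by decide, show ((5:Fin 6)=0)=False from by decide, show ((2:Fin 6)=1)=False from by decide, show ((3:Fin 6)=1)=False from by decide, show ((4:Fin 6)=1)=False from by decide, show ((5:Fin 6)=1)=False from by decide, show ((0:Fin 6)=2)=False from by decide, show ((1:Fin 6)=2)=False from by decide, show ((3:Fin 6)=2)=False from by decide, show ((4:Fin 6)=2)=False from by decide, show ((5:Fin 6)=2)=False from by decide, show ((0:Fin 6)=3)=False from by decide, show ((1:Fin 6)=3)=False from by decide, show ((2:Fin 6)=3)=False from by decide, show ((4:Fin 6)=3)=False from by decide, show ((5:Fin 6)=3)=False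 from by decide, show ((0:Fin 6)=4)=False from by decide, show ((1:Fin 6)=4)=False from by decide, show ((2:Fin 6)=4)=False from by decide, show ((3:Fin 6)=4)=False from by decide, show ((5:Fin 6)=4)=False from by decide, show ((0:Fin 6)=5)=False from by decide, show ((1:Fin 6)=5)=False from by decide, show ((2:Fin 6)=5)=False from by decide, show ((3:Fin 6)=5)=False from by decide, show ((4:Fin 6)=5)=False from by decide, show ((0:Fin 6)=1)=False from by decide, show ((1:Fin 6)=0)=False from by decide, if_true, if_false, or_self, or_false, false_or, eq_self_iff_true] at h0 h1 h2
  norm_num at h0 h1 h2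
  ring_nf at h0 h1 h2
  have key : ∀ n : ℤ, ∃ m, n ^ 2 = 2 * m + n := by
    intro n
    obtain ⟨m, hm⟩ := Int.even_mul_succ_self (n - 1)
    exact ⟨m, by linear_combination hm⟩
  have E1 : -(k 0) + k 1 * 2 = -2 := by exact_mod_cast h1
  have E0 : k 0 * 2 - k 1 + (-(k 2) - k 3) + (-(k 4) - k 5) = -2 := by
    have h := (by exact_mod_cast h0 : k 0 * 2 - k 1 - k 2 - k 3 - k 4 - k 5 = -2); linarith
  obtain ⟨m0, hq0⟩ := key (k 0)
  obtain ⟨m1, hq1⟩ := key (k 1)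
  obtain ⟨m2, hq2⟩ := key (k 2)
  obtain ⟨m3, hq3⟩ := key (k 3)
  obtain ⟨m4, hq4⟩ := key (k 4)
  obtain ⟨m5, hq5⟩ := key (k 5)
  have hS : k 1 + k 2 + k 3 + k 4 + k 5 = 2 * k 0 + 2 := by omega
  have E2 : -(k 0 * k 1 * 2) + (-(k 0 * k 2 * 2) - k 0 * k 3 * 2) +
        (-(k 0 * k 4 * 2) - k 0 * k 5 * 2) + k 0 ^ 2 * 2 + k 1 ^ 2 * 2 +
        k 2 ^ 2 * 2 + k 3 ^ 2 * 2 + k 4 ^ 2 * 2 + k 5 ^ 2 * 2 = 2 := by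
    have h := (by exact_mod_cast h2 : -(k 0 * k 1 * 2) - k 0 * k 2 * 2 - k 0 * k 3 * 2 - k 0 * k 4 * 2 - k 0 * k 5 * 2 + k 0 ^ 2 * 2 + k 1 ^ 2 * 2 + k 2 ^ 2 * 2 + k 3 ^ 2 * 2 + k 4 ^ 2 * 2 + k 5 ^ 2 * 2 = 2); linarith
  have Efin : 2 * (2 * m1 + k 1) + 2 * (2 * m2 + k 2) + 2 * (2 * m3 + k 3) +
      2 * (2 * m4 + k 4) + 2 * (2 * m5 + k 5) - 2 * (2 * m0 + k 0) = 2 + 4 * k 0 := by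
    rw [← hq0, ← hq1, ← hq2, ← hq3, ← hq4, ← hq5]
    linear_combination E2 + 2 * k 0 * hS
  omega
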